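/- Let (F, d) be a nonempty compact metric space that is expansively quasi-self-similar: there exist constants λ₀, a₀ > 0 such that for any subset N ⊆ F with diam(N) < λ₀ there exists a map φ: N → F with a₀·d(x,y) ≤ diam(N)·d(φ(x), φ(y)) for all x, y ∈ N. Then the Hausdorff dimension, lower box-counting dimension, and upper box-counting dimension of F all coincide: dim_H F = lower-dim_B F = upper-dim_B F. -/

import Mathlib

open Metric Filter

noncomputable section

/-- `packNum F ε`: the maximal number of pairwise disjoint closed balls of radius `ε`
centered in `F`. -/
def packNum {X : Type*} [MetricSpace X] (F : Set X) (ε : ℝ) : ℕ :=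
  sSup {n : ℕ | ∃ s : Finset X, s.card = n ∧ ↑s ⊆ F ∧
    (s : Set X).Pairwise fun x y => Disjoint (closedBall x ε) (closedBall y ε)}

/-- The lower box-counting dimension: `liminf_{ε → 0⁺} (- log n(ε) / log ε)`. -/
def lowerBoxDim {X : Type*} [MetricSpace X] (F : Set X) : ENNReal :=
  Filter.liminf (fun ε : ℝ =>
    ENNReal.ofReal (-(Real.log (packNum F ε)) / Real.log ε)) (nhdsWithin 0 (Set.Ioi 0))

/-- The upper box-counting dimension: `limsup_{ε → 0⁺} (- log n(ε) / log ε)`. -/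
def upperBoxDim {X : Type*} [MetricSpace X] (F : Set X) : ENNReal :=
  Filter.limsup (fun ε : ℝ =>
    ENNReal.ofReal (-(Real.log (packNum F ε)) / Real.log ε)) (nhdsWithin 0 (Set.Ioi 0))

set_option linter.unusedSectionVars false
set_option maxHeartbeats 1000000

open MeasureTheory Topology Set
open scoped ENNReal NNReal

section basics
variable {X : Type*} [MetricSpace X] [CompactSpace X] [Nonempty X]

/-- pairwise-disjoint closed balls predicate -/
def IsPack (ε : ℝ) (s : Finset X) : Prop :=
  (s : Set X).Pairwise fun x y => Disjoint (closedBall x ε) (closedBall y ε)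

lemma IsPack.dist_lt {ε : ℝ} (hε : 0 ≤ ε) {s : Finset X} (h : IsPack ε s)
    {x y : X} (hx : x ∈ s) (hy : y ∈ s) (hxy : x ≠ y) : ε < dist x y := by
  by_contra hle
  push_neg at hle
  have h1 : y ∈ closedBall x ε := by
    simpa [mem_closedBall, dist_comm] using hle
  have h2 : y ∈ closedBall y ε := mem_closedBall_self hε
  exact (h hx hy hxy).ne_of_mem h1 h2 rfl

lemma disjoint_of_dist {ε : ℝ} {x y : X} (h : 2 * ε < dist x y) :
    Disjoint (closedBall x ε) (closedBall y ε) := by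
  rw [Set.disjoint_left]
  intro z hz hz'
  have := dist_triangle x z y
  rw [mem_closedBall, dist_comm] at hz
  rw [mem_closedBall] at hz'
  linarith

lemma pack_card_bdd {ε : ℝ} (hε : 0 < ε) :
    ∃ M : ℕ, ∀ s : Finset X, IsPack ε s → s.card ≤ M := by
  obtain ⟨t, -, htfin, htcov⟩ :=
    finite_cover_balls_of_compact (isCompact_univ (X := X)) (half_pos hε)
  classical
  have hmap : ∀ x : X, ∃ c ∈ htfin.toFinset, x ∈ ball c (ε / 2) := by
    intro x
    have := htcov (Set.mem_univ x)
    simpa using this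
  choose f hf hfball using hmap
  refine ⟨htfin.toFinset.card, fun s hs => ?_⟩
  refine Finset.card_le_card_of_injOn f (fun x _ => hf x) ?_
  intro x hx y hy hxy
  by_contra hne
  have hlt := hs.dist_lt hε.le (by simpa using hx) (by simpa using hy) hne
  have d1 := hfball x
  have d2 := hfball y
  rw [mem_ball] at d1 d2
  have : dist x y ≤ dist x (f x) + dist (f y) y := by
    calc dist x y ≤ dist x (f x) + dist (f x) y := dist_triangle _ _ _
    _ = dist x (f x) + dist (f y) y := by rw [hxy, dist_comm]
  rw [dist_comm (f y) y] at this
  linarith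

variable (X) in
lemma packNum_bddAbove {ε : ℝ} (hε : 0 < ε) :
    BddAbove {n : ℕ | ∃ s : Finset X, s.card = n ∧ ↑s ⊆ (Set.univ : Set X) ∧
      (s : Set X).Pairwise fun x y => Disjoint (closedBall x ε) (closedBall y ε)} := by
  obtain ⟨M, hM⟩ := pack_card_bdd (X := X) hε
  refine ⟨M, ?_⟩
  rintro n ⟨s, hcard, -, hp⟩
  exact hcard ▸ hM s hp

lemma le_packNum {ε : ℝ} (hε : 0 < ε) {s : Finset X} (hs : IsPack ε s) :
    s.card ≤ packNum (Set.univ : Set X) ε :=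
  le_csSup (packNum_bddAbove X hε) ⟨s, rfl, Set.subset_univ _, hs⟩

lemma one_le_packNum {ε : ℝ} (hε : 0 < ε) : 1 ≤ packNum (Set.univ : Set X) ε := by
  obtain ⟨x⟩ := ‹Nonempty X›
  have : IsPack ε ({x} : Finset X) := by
    simp [IsPack]
  simpa using le_packNum hε this

lemma packNum_antitone {ε ε' : ℝ} (hε' : 0 < ε') (h : ε' ≤ ε) :
    packNum (Set.univ : Set X) ε ≤ packNum (Set.univ : Set X) ε' := by
  refine csSup_le_csSup (packNum_bddAbove X hε') ⟨0, ⟨∅, by simp [Set.Pairwise]⟩⟩ ?_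
  rintro n ⟨s, hcard, hsub, hp⟩
  refine ⟨s, hcard, hsub, fun x hx y hy hxy => ?_⟩
  exact (hp hx hy hxy).mono (closedBall_subset_closedBall h) (closedBall_subset_closedBall h)

/-- a maximal packing exists and its doubled balls cover. -/
lemma exists_maximal_pack {ε : ℝ} (hε : 0 < ε) :
    ∃ s : Finset X, s.card = packNum (Set.univ : Set X) ε ∧ IsPack ε s ∧
      ∀ y : X, ∃ x ∈ s, dist y x ≤ 2 * ε := by
  classical
  have hne : {n : ℕ | ∃ s : Finset X, s.card = n ∧ ↑s ⊆ (Set.univ : Set X) ∧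
      (s : Set X).Pairwise fun x y => Disjoint (closedBall x ε) (closedBall y ε)}.Nonempty :=
    ⟨0, ∅, by simp [Set.Pairwise]⟩
  have hmem := Nat.sSup_mem hne (packNum_bddAbove X hε)
  obtain ⟨s, hcard, -, hp⟩ := hmem
  refine ⟨s, hcard, hp, fun y => ?_⟩
  by_contra hy
  push_neg at hy
  have hyns : y ∉ s := by
    intro hys
    have h0 := hy y hys
    rw [dist_self] at h0
    linarith
  have hpack : IsPack ε (insert y s) := by
    intro a ha b hb hab
    rw [Finset.coe_insert, Set.mem_insert_iff] at ha hb
    rcases ha with rfl | ha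
    · rcases hb with rfl | hb
      · exact absurd rfl hab
      · exact disjoint_of_dist (hy b hb)
    · rcases hb with rfl | hb
      · refine disjoint_of_dist ?_
        rw [dist_comm]
        exact hy a ha
      · exact hp ha hb hab
  have hle := le_packNum hε hpack
  rw [Finset.card_insert_of_notMem hyns] at hle
  have : packNum (Set.univ : Set X) ε = s.card := hcard.symm
  omega

end basics

section dims
variable {X : Type*} [MetricSpace X] [CompactSpace X] [Nonempty X]

lemma count_le {a₀ : ℝ} (ha₀ : 0 < a₀) {ι : Type*} [DecidableEq ι] (I : Finset ι) (V : ι → Set X)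
    (hcov : ∀ x : X, ∃ n ∈ I, x ∈ V n)
    (φ : ι → X → X)
    (hφ : ∀ n ∈ I, ∀ x ∈ V n, ∀ y ∈ V n,
      a₀ * dist x y ≤ Metric.diam (V n) * dist (φ n x) (φ n y))
    {ε : ℝ} (hε : 0 < ε) :
    (packNum (Set.univ : Set X) ε : ℝ) ≤
      ∑ n ∈ I, (if 0 < Metric.diam (V n)
        then (packNum (Set.univ : Set X) (a₀ * ε / (2 * Metric.diam (V n))) : ℝ) else 1) := by
  classical
  obtain ⟨s, hscard, hspack, -⟩ := exists_maximal_pack (X := X) hε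
  choose g hgI hgV using hcov
  rw [← hscard, Finset.card_eq_sum_card_fiberwise (f := g) (t := I) (fun x _ => hgI x)]
  push_cast
  refine Finset.sum_le_sum fun n hn => ?_
  set sf := s.filter (fun x => g x = n) with hsf
  have hsfV : ∀ x ∈ sf, x ∈ V n := by
    intro x hx
    rw [hsf, Finset.mem_filter] at hx
    exact hx.2 ▸ hgV x
  have hsfs : ∀ x ∈ sf, x ∈ s := fun x hx => (Finset.mem_filter.1 hx).1
  by_cases hd : 0 < Metric.diam (V n)
  · rw [if_pos hd]
    set ε' := a₀ * ε / (2 * Metric.diam (V n)) with hε'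
    have hε'0 : 0 < ε' := by positivity
    -- distances between φ-images
    have himg : ∀ x ∈ sf, ∀ y ∈ sf, x ≠ y → 2 * ε' < dist (φ n x) (φ n y) := by
      intro x hx y hy hxy
      have h1 : ε < dist x y := hspack.dist_lt hε.le (hsfs x hx) (hsfs y hy) hxy
      have h2 := hφ n hn x (hsfV x hx) y (hsfV y hy)
      rw [hε']
      have heq : 2 * (a₀ * ε / (2 * Metric.diam (V n))) = a₀ * ε / Metric.diam (V n) := by
        field_simp
      rw [heq, div_lt_iff₀ hd]
      nlinarith
    have hinj : Set.InjOn (φ n) sf := by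
      intro x hx y hy hxy
      by_contra hne
      have := himg x hx y hy hne
      rw [hxy, dist_self] at this
      linarith
    have hpack' : IsPack ε' (sf.image (φ n)) := by
      intro a ha b hb hab
      rw [Finset.coe_image] at ha hb
      obtain ⟨x, hx, rfl⟩ := ha
      obtain ⟨y, hy, rfl⟩ := hb
      have hxy : x ≠ y := fun h => hab (by rw [h])
      exact disjoint_of_dist (himg x hx y hy hxy)
    have := le_packNum hε'0 hpack'
    rw [Finset.card_image_of_injOn hinj] at this
    exact_mod_cast this
  · rw [if_neg hd]
    have hd0 : Metric.diam (V n) = 0 :=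
      le_antisymm (not_lt.1 hd) diam_nonneg
    have : sf.card ≤ 1 := by
      rw [Finset.card_le_one]
      intro x hx y hy
      by_contra hne
      have h1 : ε < dist x y := hspack.dist_lt hε.le (hsfs x hx) (hsfs y hy) hne
      have h2 : dist x y ≤ Metric.diam (V n) :=
        dist_le_diam_of_mem (Bornology.IsBounded.subset (Metric.isBounded_of_compactSpace) (Set.subset_univ _))
          (hsfV x hx) (hsfV y hy)
      rw [hd0] at h2
      linarith
    exact_mod_cast this

end dims

lemma key_induction {ι : Type*} (I : Finset ι) (c : ι → ℝ) (t m : ℝ) (ht : 0 < t)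
    (hm : 0 ≤ m)
    (hc0 : ∀ n ∈ I, 0 < c n) (hc2 : ∀ n ∈ I, c n ≤ 1/2)
    (hcs : ∑ n ∈ I, c n ^ t ≤ 1/2)
    (N : ℝ → ℕ)
    (hrec : ∀ ε : ℝ, 0 < ε → ε ≤ 1 →
      (N ε : ℝ) ≤ (∑ n ∈ I, if ε / c n ≤ 1 then (N (ε / c n) : ℝ) else 0) + m) :
    ∀ ε : ℝ, 0 < ε → ε ≤ 1 → (N ε : ℝ) ≤ (2 * m + 1) * ε ^ (-t) := by
  classical
  set K : ℝ := 2 * m + 1 with hK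
  have hK1 : 1 ≤ K := by simp [hK]; linarith
  have hKpos : 0 < K := by linarith
  have main : ∀ k : ℕ, ∀ ε : ℝ, 0 < ε → ε ≤ 1 → (1/2 : ℝ)^k < ε → (N ε : ℝ) ≤ K * ε ^ (-t) := by
    intro k
    induction k with
    | zero =>
      intro ε hε h1 hlt
      simp at hlt
      linarith
    | succ k ih =>
      intro ε hε h1 hlt
      by_cases hbig : (1/2 : ℝ)^k < ε
      · exact ih ε hε h1 hbig
      push_neg at hbig
      have hterm : ∀ n ∈ I, (if ε / c n ≤ 1 then (N (ε / c n) : ℝ) else 0)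
          ≤ K * ε ^ (-t) * c n ^ t := by
        intro n hn
        have hcn := hc0 n hn
        have hcn2 := hc2 n hn
        split_ifs with hif
        · have hε' : 0 < ε / c n := by positivity
          have hlt' : (1/2 : ℝ)^k < ε / c n := by
            have h2ε : 2 * ε ≤ ε / c n := by
              rw [le_div_iff₀ hcn]
              nlinarith
            have : (1/2 : ℝ)^k = 2 * (1/2 : ℝ)^(k+1) := by ring
            rw [this]
            calc 2 * (1/2 : ℝ)^(k+1) < 2 * ε := by linarith
              _ ≤ ε / c n := h2ε
          have := ih (ε / c n) hε' hif hlt'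
          refine this.trans (le_of_eq ?_)
          have he2 : (0:ℝ) < ε ^ t := Real.rpow_pos_of_pos hε t
          have hc3 : (0:ℝ) < c n ^ t := Real.rpow_pos_of_pos hcn t
          rw [Real.div_rpow hε.le hcn.le, Real.rpow_neg hε.le, Real.rpow_neg hcn.le]
          field_simp
        · positivity
      have hsum : (∑ n ∈ I, if ε / c n ≤ 1 then (N (ε / c n) : ℝ) else 0)
          ≤ K * ε ^ (-t) * (1/2) := by
        calc (∑ n ∈ I, if ε / c n ≤ 1 then (N (ε / c n) : ℝ) else 0)
            ≤ ∑ n ∈ I, K * ε ^ (-t) * c n ^ t := Finset.sum_le_sum hterm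
          _ = K * ε ^ (-t) * ∑ n ∈ I, c n ^ t := by rw [Finset.mul_sum]
          _ ≤ K * ε ^ (-t) * (1/2) := by
              refine mul_le_mul_of_nonneg_left hcs ?_
              positivity
      have hrpow1 : 1 ≤ ε ^ (-t) := by
        rw [Real.rpow_neg hε.le]
        have he2 : (0:ℝ) < ε ^ t := Real.rpow_pos_of_pos hε t
        exact (one_le_inv₀ he2).2 (Real.rpow_le_one hε.le h1 ht.le)
      have hmK : m ≤ K * ε ^ (-t) * (1/2) := by
        nlinarith
      have hfin := hrec ε hε h1
      nlinarith [hsum, hmK, hfin]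
  intro ε hε h1
  obtain ⟨k, hk⟩ := exists_pow_lt_of_lt_one hε (by norm_num : (1/2 : ℝ) < 1)
  exact main k ε hε h1 hk


lemma add_rpow_le {a b t : ℝ} (ha : 0 ≤ a) (hb : 0 ≤ b) (ht : 0 < t) :
    (a + b) ^ t ≤ 2 ^ t * (a ^ t + b ^ t) := by
  have h1 : a + b ≤ 2 * max a b := by
    rcases le_total a b with h | h
    · simp [max_eq_right h]; linarith
    · simp [max_eq_left h]; linarith
  have h2 : (a + b) ^ t ≤ (2 * max a b) ^ t :=
    Real.rpow_le_rpow (by linarith) h1 ht.le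
  have h3 : (2 * max a b : ℝ) ^ t = 2 ^ t * (max a b) ^ t :=
    Real.mul_rpow (by norm_num) (le_max_iff.2 (Or.inl ha))
  have h4 : (max a b) ^ t ≤ a ^ t + b ^ t := by
    rcases le_total a b with h | h
    · rw [max_eq_right h]
      have := Real.rpow_nonneg ha t
      linarith
    · rw [max_eq_left h]
      have := Real.rpow_nonneg hb t
      linarith
  calc (a + b) ^ t ≤ 2 ^ t * (max a b) ^ t := by rw [← h3]; exact h2
    _ ≤ 2 ^ t * (a ^ t + b ^ t) := by
        refine mul_le_mul_of_nonneg_left h4 ?_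
        positivity

lemma cover_extraction {X : Type*} [MetricSpace X] [CompactSpace X] [Nonempty X]
    [MeasurableSpace X] [BorelSpace X]
    {t : ℝ} (ht : 0 < t) (h0 : μH[t] (Set.univ : Set X) = 0)
    {ρ θ : ℝ} (hρ : 0 < ρ) (hθ : 0 < θ) :
    ∃ (I : Finset ℕ) (V : ℕ → Set X),
      (∀ x : X, ∃ n ∈ I, x ∈ V n) ∧
      (∀ n, Metric.diam (V n) ≤ ρ) ∧
      (∑ n ∈ I, Metric.diam (V n) ^ t ≤ θ) := by
  classical
  set A : ℝ := 2 ^ t with hA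
  have hApos : 0 < A := by positivity
  have hhalf : ((1:ℝ)/2) ^ t < 1 := Real.rpow_lt_one (by norm_num) (by norm_num) ht
  have hhalf0 : 0 ≤ ((1:ℝ)/2) ^ t := Real.rpow_nonneg (by norm_num) t
  set B : ℝ := (1 - (1/2 : ℝ) ^ t)⁻¹ with hB
  have hBpos : 0 < B := by
    rw [hB]
    exact inv_pos.2 (by linarith)
  set γ : ℝ := (θ / (2 * A * B)) ^ t⁻¹ with hγ
  have hγpos : 0 < γ :=
    Real.rpow_pos_of_pos (div_pos hθ (mul_pos (mul_pos two_pos hApos) hBpos)) _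
  set δ₀ : ℝ := min (ρ/4) (γ/2) with hδ₀
  have hδ₀pos : 0 < δ₀ := lt_min (by linarith) (half_pos hγpos)
  set θ₂ : ℝ := θ / (2 * A) with hθ₂
  have hθ₂pos : 0 < θ₂ := div_pos hθ (by linarith)
  -- extract a countable cover with small sum
  have h1 : (⨅ (T : ℕ → Set X) (_ : Set.univ ⊆ ⋃ n, T n)
      (_ : ∀ n, EMetric.diam (T n) ≤ ENNReal.ofReal (ρ/2)),
      ∑' n, ⨆ _ : (T n).Nonempty, EMetric.diam (T n) ^ t) = 0 := by
    refine le_antisymm ?_ zero_le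
    rw [← h0, Measure.hausdorffMeasure_apply]
    exact le_iSup₂ (f := fun (r : ℝ≥0∞) (_ : 0 < r) =>
      ⨅ (T : ℕ → Set X) (_ : Set.univ ⊆ ⋃ n, T n) (_ : ∀ n, EMetric.diam (T n) ≤ r),
        ∑' n, ⨆ _ : (T n).Nonempty, EMetric.diam (T n) ^ t)
      (ENNReal.ofReal (ρ/2)) (by simp [ENNReal.ofReal_pos]; linarith)
  have h2 : (⨅ (T : ℕ → Set X) (_ : Set.univ ⊆ ⋃ n, T n)
      (_ : ∀ n, EMetric.diam (T n) ≤ ENNReal.ofReal (ρ/2)),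
      ∑' n, ⨆ _ : (T n).Nonempty, EMetric.diam (T n) ^ t) < ENNReal.ofReal θ₂ := by
    rw [h1]
    exact ENNReal.ofReal_pos.2 hθ₂pos
  simp only [iInf_lt_iff] at h2
  obtain ⟨T, hTcov, hTdiam, hTsum⟩ := h2
  -- the thickened sets
  set δ : ℕ → ℝ := fun n => δ₀ * (1/2)^n with hδ
  have hδpos : ∀ n, 0 < δ n := fun n => by rw [hδ]; positivity
  set V : ℕ → Set X := fun n => Metric.thickening (δ n) (T n) with hV
  have hTV : ∀ n, T n ⊆ V n := fun n => self_subset_thickening (hδpos n) _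
  have hVcov : (Set.univ : Set X) ⊆ ⋃ n, V n :=
    hTcov.trans (Set.iUnion_mono hTV)
  obtain ⟨I, hI⟩ := isCompact_univ.elim_finite_subcover V
    (fun n => isOpen_thickening) hVcov
  -- diameter bounds
  have hdT : ∀ n, Metric.diam (T n) ≤ ρ/2 := by
    intro n
    have := ENNReal.toReal_mono (ENNReal.ofReal_ne_top) (hTdiam n)
    rwa [ENNReal.toReal_ofReal (by linarith)] at this
  have hdV : ∀ n, Metric.diam (V n) ≤ Metric.diam (T n) + 2 * δ n := fun n =>
    Metric.diam_thickening_le _ (hδpos n).le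
  have hdVρ : ∀ n, Metric.diam (V n) ≤ ρ := by
    intro n
    have h3 : δ n ≤ δ₀ := by
      rw [hδ]
      have : (1/2:ℝ)^n ≤ 1 := pow_le_one₀ (by norm_num) (by norm_num)
      nlinarith
    have h4 : δ₀ ≤ ρ/4 := min_le_left _ _
    have := hdV n
    have := hdT n
    linarith
  refine ⟨I, V, ?_, hdVρ, ?_⟩
  · intro x
    have := hI (Set.mem_univ x)
    rw [Set.mem_iUnion₂] at this
    obtain ⟨n, hn, hx⟩ := this
    exact ⟨n, hn, hx⟩
  -- the sum bound
  have hsplit : ∀ n, Metric.diam (V n) ^ t ≤ A * (Metric.diam (T n) ^ t + (2 * δ n) ^ t) := by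
    intro n
    calc Metric.diam (V n) ^ t ≤ (Metric.diam (T n) + 2 * δ n) ^ t :=
          Real.rpow_le_rpow Metric.diam_nonneg (hdV n) ht.le
      _ ≤ A * (Metric.diam (T n) ^ t + (2 * δ n) ^ t) :=
          add_rpow_le Metric.diam_nonneg (by have := (hδpos n).le; linarith) ht
  have hsum1 : ∑ n ∈ I, Metric.diam (T n) ^ t ≤ θ₂ := by
    have hterm : ∀ n, (EMetric.diam (T n)) ^ t ≤ ⨆ _ : (T n).Nonempty, EMetric.diam (T n) ^ t := by
      intro n
      by_cases hne : (T n).Nonempty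
      · rw [iSup_pos hne]
      · rw [Set.not_nonempty_iff_eq_empty] at hne
        rw [hne]
        simp [ENNReal.zero_rpow_of_pos ht, EMetric.diam_empty, ht]
        exact Or.inl (EMetric.diam_subsingleton Set.subsingleton_empty)
    have hfs : ∑ n ∈ I, (EMetric.diam (T n)) ^ t ≤ ENNReal.ofReal θ₂ := by
      calc ∑ n ∈ I, (EMetric.diam (T n)) ^ t
          ≤ ∑ n ∈ I, ⨆ _ : (T n).Nonempty, EMetric.diam (T n) ^ t :=
            Finset.sum_le_sum fun n _ => hterm n
        _ ≤ ∑' n, ⨆ _ : (T n).Nonempty, EMetric.diam (T n) ^ t := ENNReal.sum_le_tsum I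
        _ ≤ ENNReal.ofReal θ₂ := hTsum.le
    have hne : ∀ n ∈ I, (EMetric.diam (T n)) ^ t ≠ ∞ := by
      intro n _
      exact ENNReal.rpow_ne_top_of_nonneg ht.le
        (ne_top_of_le_ne_top ENNReal.ofReal_ne_top (hTdiam n))
    calc ∑ n ∈ I, Metric.diam (T n) ^ t
        = ∑ n ∈ I, ((EMetric.diam (T n)) ^ t).toReal := by
          refine Finset.sum_congr rfl fun n _ => ?_
          rw [← ENNReal.toReal_rpow]
          rfl
      _ = (∑ n ∈ I, (EMetric.diam (T n)) ^ t).toReal := (ENNReal.toReal_sum hne).symm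
      _ ≤ (ENNReal.ofReal θ₂).toReal := by
          refine ENNReal.toReal_mono ENNReal.ofReal_ne_top hfs
      _ = θ₂ := ENNReal.toReal_ofReal hθ₂pos.le
  have hsum2 : ∑ n ∈ I, (2 * δ n) ^ t ≤ (2 * δ₀) ^ t * B := by
    have hterm : ∀ n : ℕ, (2 * δ n) ^ t = (2 * δ₀) ^ t * ((1/2:ℝ) ^ t) ^ n := by
      intro n
      rw [hδ]
      have h5 : 2 * (δ₀ * (1/2:ℝ)^n) = (2 * δ₀) * (1/2:ℝ)^n := by ring
      rw [h5, Real.mul_rpow (by linarith) (by positivity)]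
      congr 1
      rw [← Real.rpow_natCast ((1:ℝ)/2) n, ← Real.rpow_natCast (((1:ℝ)/2) ^ t) n,
        ← Real.rpow_mul (by norm_num), ← Real.rpow_mul (by norm_num), mul_comm]
    calc ∑ n ∈ I, (2 * δ n) ^ t = ∑ n ∈ I, (2 * δ₀) ^ t * ((1/2:ℝ) ^ t) ^ n := by
          exact Finset.sum_congr rfl fun n _ => hterm n
      _ = (2 * δ₀) ^ t * ∑ n ∈ I, ((1/2:ℝ) ^ t) ^ n := by rw [Finset.mul_sum]
      _ ≤ (2 * δ₀) ^ t * ∑' n, ((1/2:ℝ) ^ t) ^ n := by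
          refine mul_le_mul_of_nonneg_left ?_ (by positivity)
          exact Summable.sum_le_tsum I (fun n _ => by positivity)
            (summable_geometric_of_lt_one hhalf0 hhalf)
      _ = (2 * δ₀) ^ t * B := by
          rw [tsum_geometric_of_lt_one hhalf0 hhalf]
  have hδγ : (2 * δ₀) ^ t ≤ θ / (2 * A * B) := by
    have h6 : 2 * δ₀ ≤ γ := by
      have : δ₀ ≤ γ/2 := min_le_right _ _
      linarith
    calc (2 * δ₀) ^ t ≤ γ ^ t := Real.rpow_le_rpow (by linarith) h6 ht.le
      _ = θ / (2 * A * B) := by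
          rw [hγ, ← Real.rpow_mul (by positivity), inv_mul_cancel₀ ht.ne', Real.rpow_one]
  calc ∑ n ∈ I, Metric.diam (V n) ^ t
      ≤ ∑ n ∈ I, A * (Metric.diam (T n) ^ t + (2 * δ n) ^ t) :=
        Finset.sum_le_sum fun n _ => hsplit n
    _ = A * (∑ n ∈ I, Metric.diam (T n) ^ t + ∑ n ∈ I, (2 * δ n) ^ t) := by
        rw [← Finset.mul_sum, Finset.sum_add_distrib]
    _ ≤ A * (θ₂ + (2 * δ₀) ^ t * B) := by
        refine mul_le_mul_of_nonneg_left ?_ hApos.le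
        exact add_le_add hsum1 hsum2
    _ ≤ A * (θ₂ + θ / (2 * A * B) * B) := by
        refine mul_le_mul_of_nonneg_left ?_ hApos.le
        refine add_le_add_right ?_ _
        exact mul_le_mul_of_nonneg_right hδγ hBpos.le
    _ = θ := by
        rw [hθ₂]
        field_simp
        ring


section dims2
variable {X : Type*} [MetricSpace X] [CompactSpace X] [Nonempty X]

lemma partB_limsup {t K : ℝ} (ht : 0 ≤ t) (hK : 1 ≤ K)
    (h : ∀ ε : ℝ, 0 < ε → ε ≤ 1 → (packNum (Set.univ : Set X) ε : ℝ) ≤ K * ε ^ (-t)) :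
    upperBoxDim (Set.univ : Set X) ≤ ENNReal.ofReal t := by
  refine ENNReal.le_of_forall_pos_le_add fun δ hδ _ => ?_
  have hδ' : (0:ℝ) < δ := hδ
  have hlogK : 0 ≤ Real.log K := Real.log_nonneg hK
  set ε₁ : ℝ := min (1/2) (Real.exp (-(Real.log K / δ))) with hε₁
  have hε₁pos : 0 < ε₁ := lt_min (by norm_num) (Real.exp_pos _)
  have hev : ∀ᶠ ε in 𝓝[>] (0:ℝ),
      ENNReal.ofReal (-(Real.log (packNum (Set.univ : Set X) ε)) / Real.log ε)
        ≤ ENNReal.ofReal (t + δ) := by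
    filter_upwards [Ioo_mem_nhdsGT_of_mem (⟨le_rfl, hε₁pos⟩ : (0:ℝ) ∈ Set.Ico 0 ε₁)]
      with ε hε
    obtain ⟨hε0, hεlt⟩ := hε
    have hε1 : ε < 1 := lt_of_lt_of_le hεlt ((min_le_left _ _).trans (by norm_num))
    have hlogε : Real.log ε < 0 := Real.log_neg hε0 hε1
    have hεexp : ε < Real.exp (-(Real.log K / δ)) := lt_of_lt_of_le hεlt (min_le_right _ _)
    have hlogε2 : Real.log ε < -(Real.log K / δ) := by
      calc Real.log ε < Real.log (Real.exp (-(Real.log K / δ))) :=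
            Real.log_lt_log hε0 hεexp
        _ = -(Real.log K / δ) := Real.log_exp _
    set n : ℕ := packNum (Set.univ : Set X) ε with hn
    have hn1 : 1 ≤ n := one_le_packNum hε0
    have hnpos : (0:ℝ) < n := by exact_mod_cast hn1
    have hbound := h ε hε0 hε1.le
    have hlogn : Real.log n ≤ Real.log K + (-t) * Real.log ε := by
      calc Real.log n ≤ Real.log (K * ε ^ (-t)) := Real.log_le_log hnpos hbound
        _ = Real.log K + Real.log (ε ^ (-t)) :=
            Real.log_mul (by linarith) (by positivity)
        _ = Real.log K + (-t) * Real.log ε := by rw [Real.log_rpow hε0]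
    have hlogn0 : 0 ≤ Real.log n := Real.log_nonneg (by exact_mod_cast hn1)
    have hv : -(Real.log n) / Real.log ε = Real.log n / (-Real.log ε) := by
      rw [div_neg, neg_div]
    have hval : -(Real.log n) / Real.log ε ≤ t + δ := by
      rw [hv, div_le_iff₀ (by linarith)]
      have hKd : Real.log K ≤ δ * (-Real.log ε) := by
        rw [← neg_neg (Real.log K / δ)] at hlogε2
        have h2 : Real.log K / δ < -Real.log ε := by linarith
        rw [div_lt_iff₀ hδ'] at h2
        nlinarith
      nlinarith
    exact ENNReal.ofReal_le_ofReal hval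
  have hls : upperBoxDim (Set.univ : Set X) ≤ ENNReal.ofReal (t + δ) :=
    limsup_le_of_le (by isBoundedDefault) hev
  calc upperBoxDim (Set.univ : Set X) ≤ ENNReal.ofReal (t + δ) := hls
    _ = ENNReal.ofReal t + ENNReal.ofReal δ := ENNReal.ofReal_add ht hδ'.le
    _ = ENNReal.ofReal t + δ := by rw [ENNReal.ofReal_coe_nnreal]

end dims2


section parts
variable {X : Type*} [MetricSpace X] [CompactSpace X] [Nonempty X]

lemma count_lt_rpow {ε : ℝ} (hε : 0 < ε) (h1 : ε < 1) {n : ℕ} (hn : 1 ≤ n) (d : ℝ≥0)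
    (h : ENNReal.ofReal (-(Real.log n) / Real.log ε) < (d : ℝ≥0∞)) :
    (n : ℝ) < ε ^ (-(d:ℝ)) := by
  have hlogε : Real.log ε < 0 := Real.log_neg hε h1
  have hlogn : 0 ≤ Real.log n := Real.log_nonneg (by exact_mod_cast hn)
  have hlogε' : 0 < -Real.log ε := by linarith
  have hv : -(Real.log n) / Real.log ε = Real.log n / (-Real.log ε) := by
    rw [div_neg, neg_div]
  have hv0 : 0 ≤ -(Real.log n) / Real.log ε := by
    rw [hv]; positivity
  rw [ENNReal.ofReal_lt_coe_iff hv0, hv, div_lt_iff₀ hlogε'] at h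
  rw [Real.lt_rpow_iff_log_lt (by positivity) hε]
  nlinarith

lemma partA : dimH (Set.univ : Set X) ≤ lowerBoxDim (Set.univ : Set X) := by
  borelize X
  refine dimH_le fun d hd => ?_
  by_contra hlt
  rw [not_le] at hlt
  -- frequently the box function is < d
  have hfreq : ∃ᶠ ε in 𝓝[>] (0:ℝ),
      ENNReal.ofReal (-(Real.log (packNum (Set.univ : Set X) ε)) / Real.log ε) < (d : ℝ≥0∞) := by
    by_contra hc
    rw [Filter.not_frequently] at hc
    simp only [not_lt] at hc
    exact absurd (Filter.le_liminf_of_le (by isBoundedDefault) hc) (not_le.2 hlt)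
  have hev : ∀ᶠ ε in 𝓝[>] (0:ℝ), 0 < ε ∧ ε < 1 := by
    filter_upwards [self_mem_nhdsWithin,
      eventually_nhdsWithin_of_eventually_nhds (eventually_lt_nhds zero_lt_one)] with ε h1 h2
    exact ⟨h1, h2⟩
  obtain ⟨u, hu, hup⟩ := Filter.exists_seq_forall_of_frequently (hfreq.and_eventually hev)
  have hu0 : ∀ k, 0 < u k := fun k => (hup k).2.1
  have hu1 : ∀ k, u k < 1 := fun k => (hup k).2.2
  have hu0' : Tendsto u atTop (𝓝 0) := hu.mono_right nhdsWithin_le_nhds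
  -- maximal packings give covers
  have hpack := fun k => exists_maximal_pack (X := X) (hu0 k)
  choose s hscard hspack hscov using hpack
  -- the measure bound
  have hmb : μH[(d:ℝ)] (Set.univ : Set X) ≤
      liminf (fun k => ∑ i : (s k), EMetric.diam (closedBall (i : X) (2 * u k)) ^ (d:ℝ)) atTop := by
    refine Measure.hausdorffMeasure_le_liminf_sum (d:ℝ) Set.univ
      (fun k => ENNReal.ofReal (4 * u k)) ?_ _ ?_ ?_
    · rw [← ENNReal.ofReal_zero]
      exact (ENNReal.continuous_ofReal.tendsto 0).comp (by simpa using hu0'.const_mul 4)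
    · refine Eventually.of_forall fun k i => ?_
      refine EMetric.diam_le fun a ha b hb => ?_
      rw [edist_dist]
      refine ENNReal.ofReal_le_ofReal ?_
      rw [mem_closedBall] at ha hb
      have := dist_triangle a (i : X) b
      rw [dist_comm (i : X) b] at this
      linarith
    · refine Eventually.of_forall fun k x _ => ?_
      obtain ⟨c, hc, hcd⟩ := hscov k x
      exact Set.mem_iUnion.2 ⟨⟨c, hc⟩, by simpa [mem_closedBall] using hcd⟩
  -- each sum is at most 4^d
  have hsum : ∀ k, ∑ i : (s k), EMetric.diam (closedBall (i : X) (2 * u k)) ^ (d:ℝ)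
      ≤ ENNReal.ofReal (4 ^ (d:ℝ)) := by
    intro k
    have hterm : ∀ i : (s k), EMetric.diam (closedBall (i : X) (2 * u k)) ^ (d:ℝ)
        ≤ ENNReal.ofReal ((4 * u k) ^ (d:ℝ)) := by
      intro i
      rw [← ENNReal.ofReal_rpow_of_pos (by have := hu0 k; linarith)]
      refine ENNReal.rpow_le_rpow ?_ d.2
      refine EMetric.diam_le fun a ha b hb => ?_
      rw [edist_dist]
      refine ENNReal.ofReal_le_ofReal ?_
      rw [mem_closedBall] at ha hb
      have := dist_triangle a (i : X) b
      rw [dist_comm (i : X) b] at this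
      linarith
    calc ∑ i : (s k), EMetric.diam (closedBall (i : X) (2 * u k)) ^ (d:ℝ)
        ≤ ∑ _i : (s k), ENNReal.ofReal ((4 * u k) ^ (d:ℝ)) :=
          Finset.sum_le_sum (fun i _ => hterm i)
      _ = ((s k).card : ℝ≥0∞) * ENNReal.ofReal ((4 * u k) ^ (d:ℝ)) := by simp [mul_comm]
      _ ≤ ENNReal.ofReal ((u k) ^ (-(d:ℝ))) * ENNReal.ofReal ((4 * u k) ^ (d:ℝ)) := by
          refine mul_le_mul_left ?_ _
          rw [← ENNReal.ofReal_natCast]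
          refine ENNReal.ofReal_le_ofReal ?_
          refine le_of_lt ?_
          rw [hscard k]
          exact count_lt_rpow (hu0 k) (hu1 k) (one_le_packNum (hu0 k)) d (hup k).1
      _ = ENNReal.ofReal ((u k) ^ (-(d:ℝ)) * (4 * u k) ^ (d:ℝ)) := by
          rw [ENNReal.ofReal_mul (Real.rpow_nonneg (hu0 k).le _)]
      _ = ENNReal.ofReal (4 ^ (d:ℝ)) := by
          congr 1
          rw [Real.mul_rpow (by norm_num) (hu0 k).le, mul_comm ((4:ℝ) ^ (d:ℝ)), ← mul_assoc,
            ← Real.rpow_add (hu0 k)]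
          simp
  have hfin : μH[(d:ℝ)] (Set.univ : Set X) ≤ ENNReal.ofReal (4 ^ (d:ℝ)) := by
    refine hmb.trans ?_
    exact liminf_le_of_frequently_le (Eventually.frequently (Eventually.of_forall hsum))
  rw [hd] at hfin
  exact absurd hfin (by simp)

end parts


section partB
variable {X : Type*} [MetricSpace X] [CompactSpace X] [Nonempty X]

lemma partB_key [MeasurableSpace X] [BorelSpace X]
    (lam₀ a₀ : ℝ) (hlam₀ : 0 < lam₀) (ha₀ : 0 < a₀)
    (H : ∀ N : Set X, Metric.diam N < lam₀ →
      ∃ φ : X → X, ∀ x ∈ N, ∀ y ∈ N,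
        a₀ * dist x y ≤ Metric.diam N * dist (φ x) (φ y))
    (t : ℝ) (hlt : dimH (Set.univ : Set X) < ENNReal.ofReal t) :
    upperBoxDim (Set.univ : Set X) ≤ ENNReal.ofReal t := by
  classical
  have ht : 0 < t := by
    by_contra h0
    push_neg at h0
    rw [ENNReal.ofReal_eq_zero.2 h0] at hlt
    exact absurd hlt (by simp)
  -- Hausdorff measure vanishes at t
  have hμ : μH[t] (Set.univ : Set X) = 0 := by
    have h1 : dimH (Set.univ : Set X) < (t.toNNReal : ℝ≥0∞) := by
      simpa [ENNReal.ofReal] using hlt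
    have h2 := hausdorffMeasure_of_dimH_lt h1
    rwa [Real.coe_toNNReal t ht.le] at h2
  -- extract a good cover
  set ρ : ℝ := min lam₀ a₀ / 8 with hρdef
  have hρpos : 0 < ρ := by
    rw [hρdef]
    have := lt_min hlam₀ ha₀
    positivity
  set θ : ℝ := (a₀ / 2) ^ t * (1/2) with hθdef
  have hθpos : 0 < θ := by
    rw [hθdef]; positivity
  obtain ⟨I, V, hcov, hdiam, hsum⟩ := cover_extraction (X := X) ht hμ hρpos hθpos
  -- the expanding maps
  have hVlam : ∀ n, Metric.diam (V n) < lam₀ := by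
    intro n
    refine (hdiam n).trans_lt ?_
    rw [hρdef]
    have h1 : min lam₀ a₀ ≤ lam₀ := min_le_left _ _
    linarith
  have hφex : ∀ n : ℕ, ∃ φ : X → X, ∀ x ∈ V n, ∀ y ∈ V n,
      a₀ * dist x y ≤ Metric.diam (V n) * dist (φ x) (φ y) := fun n => H (V n) (hVlam n)
  choose φ hφ using hφex
  set N : ℝ → ℕ := fun ε => packNum (Set.univ : Set X) ε with hN
  -- counting
  have hcount : ∀ ε : ℝ, 0 < ε → (N ε : ℝ) ≤
      ∑ n ∈ I, (if 0 < Metric.diam (V n)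
        then (N (a₀ * ε / (2 * Metric.diam (V n))) : ℝ) else 1) := by
    intro ε hε
    exact count_le ha₀ I V hcov φ (fun n _ => hφ n) hε
  -- set up the recursion data
  set I' : Finset ℕ := I.filter (fun n => 0 < Metric.diam (V n)) with hI'
  set c : ℕ → ℝ := fun n => 2 * Metric.diam (V n) / a₀ with hc
  have hc0 : ∀ n ∈ I', 0 < c n := by
    intro n hn
    rw [hI', Finset.mem_filter] at hn
    rw [hc]
    have := hn.2
    positivity
  have hc2 : ∀ n ∈ I', c n ≤ 1/2 := by
    intro n hn
    rw [hc]
    have h1 := hdiam n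
    have h2 : ρ ≤ a₀ / 8 := by
      rw [hρdef]
      have := min_le_right lam₀ a₀
      linarith
    rw [div_le_iff₀ ha₀]
    nlinarith [Metric.diam_nonneg (s := V n)]
  have hcs : ∑ n ∈ I', c n ^ t ≤ 1/2 := by
    have hterm : ∀ n ∈ I', c n ^ t = (2/a₀) ^ t * Metric.diam (V n) ^ t := by
      intro n hn
      simp only [hc]
      have h5 : 2 * Metric.diam (V n) / a₀ = (2/a₀) * Metric.diam (V n) := by ring
      rw [h5, Real.mul_rpow (by positivity) Metric.diam_nonneg]
    calc ∑ n ∈ I', c n ^ t = ∑ n ∈ I', (2/a₀) ^ t * Metric.diam (V n) ^ t :=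
          Finset.sum_congr rfl hterm
      _ = (2/a₀) ^ t * ∑ n ∈ I', Metric.diam (V n) ^ t := by rw [Finset.mul_sum]
      _ ≤ (2/a₀) ^ t * ∑ n ∈ I, Metric.diam (V n) ^ t := by
          refine mul_le_mul_of_nonneg_left ?_ (by positivity)
          refine Finset.sum_le_sum_of_subset_of_nonneg (Finset.filter_subset _ _) ?_
          intro n _ _
          positivity
      _ ≤ (2/a₀) ^ t * θ := mul_le_mul_of_nonneg_left hsum (by positivity)
      _ = 1/2 := by
          rw [hθdef, ← mul_assoc, ← Real.mul_rpow (by positivity) (by positivity)]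
          have h9 : (2/a₀) * (a₀/2) = 1 := by field_simp
          rw [h9, Real.one_rpow, one_mul]
  set m : ℝ := (I.card : ℝ) * (N 1 : ℝ) + (I.card : ℝ) with hm
  have hm0 : 0 ≤ m := by
    rw [hm]; positivity
  have hrec : ∀ ε : ℝ, 0 < ε → ε ≤ 1 →
      (N ε : ℝ) ≤ (∑ n ∈ I', if ε / c n ≤ 1 then (N (ε / c n) : ℝ) else 0) + m := by
    intro ε hε hε1
    have h1 := hcount ε hε
    -- rewrite the sum over I as sum over I' plus the rest
    have h2 : ∑ n ∈ I, (if 0 < Metric.diam (V n)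
        then (N (a₀ * ε / (2 * Metric.diam (V n))) : ℝ) else 1)
        = ∑ n ∈ I', (N (a₀ * ε / (2 * Metric.diam (V n))) : ℝ)
          + ∑ n ∈ I.filter (fun n => ¬ 0 < Metric.diam (V n)), (1:ℝ) := by
      rw [hI', Finset.sum_ite]
    have h3 : ∀ n ∈ I', a₀ * ε / (2 * Metric.diam (V n)) = ε / c n := by
      intro n hn
      rw [hI', Finset.mem_filter] at hn
      simp only [hc]
      have hd0 : Metric.diam (V n) ≠ 0 := ne_of_gt hn.2
      have ha0 : a₀ ≠ 0 := ne_of_gt ha₀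
      field_simp
    have h4 : ∑ n ∈ I', (N (a₀ * ε / (2 * Metric.diam (V n))) : ℝ)
        = ∑ n ∈ I', (N (ε / c n) : ℝ) := by
      refine Finset.sum_congr rfl fun n hn => ?_
      rw [h3 n hn]
    have h5 : ∀ n ∈ I', (N (ε / c n) : ℝ)
        ≤ (if ε / c n ≤ 1 then (N (ε / c n) : ℝ) else 0) + (N 1 : ℝ) := by
      intro n hn
      split_ifs with hif
      · have : (0:ℝ) ≤ (N 1 : ℝ) := by positivity
        linarith
      · push_neg at hif
        have hmono : N (ε / c n) ≤ N 1 := packNum_antitone one_pos hif.le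
        have : (N (ε / c n) : ℝ) ≤ (N 1 : ℝ) := by exact_mod_cast hmono
        linarith
    have h6 : ∑ n ∈ I', (N (ε / c n) : ℝ)
        ≤ (∑ n ∈ I', if ε / c n ≤ 1 then (N (ε / c n) : ℝ) else 0)
          + (I'.card : ℝ) * (N 1 : ℝ) := by
      calc ∑ n ∈ I', (N (ε / c n) : ℝ)
          ≤ ∑ n ∈ I', ((if ε / c n ≤ 1 then (N (ε / c n) : ℝ) else 0) + (N 1 : ℝ)) :=
            Finset.sum_le_sum h5
        _ = (∑ n ∈ I', if ε / c n ≤ 1 then (N (ε / c n) : ℝ) else 0)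
            + (I'.card : ℝ) * (N 1 : ℝ) := by
            rw [Finset.sum_add_distrib, Finset.sum_const, nsmul_eq_mul]
    have h7 : ∑ n ∈ I.filter (fun n => ¬ 0 < Metric.diam (V n)), (1:ℝ)
        ≤ (I.card : ℝ) := by
      rw [Finset.sum_const, nsmul_eq_mul, mul_one]
      exact_mod_cast Finset.card_filter_le _ _
    have h8 : (I'.card : ℝ) ≤ (I.card : ℝ) := by
      exact_mod_cast Finset.card_filter_le _ _
    have h9 : (0:ℝ) ≤ (N 1 : ℝ) := by positivity
    rw [hm]
    calc (N ε : ℝ) ≤ ∑ n ∈ I', (N (ε / c n) : ℝ)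
          + ∑ n ∈ I.filter (fun n => ¬ 0 < Metric.diam (V n)), (1:ℝ) := by
          rw [← h4, ← h2]; exact h1
      _ ≤ (∑ n ∈ I', if ε / c n ≤ 1 then (N (ε / c n) : ℝ) else 0)
          + (I'.card : ℝ) * (N 1 : ℝ) + (I.card : ℝ) := by
          have := h6
          linarith
      _ ≤ (∑ n ∈ I', if ε / c n ≤ 1 then (N (ε / c n) : ℝ) else 0)
          + ((I.card : ℝ) * (N 1 : ℝ) + (I.card : ℝ)) := by
          have : (I'.card : ℝ) * (N 1 : ℝ) ≤ (I.card : ℝ) * (N 1 : ℝ) :=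
            mul_le_mul_of_nonneg_right h8 h9
          linarith
  -- apply the induction
  have hKbound := key_induction I' c t m ht hm0 hc0 hc2 hcs N hrec
  refine partB_limsup (X := X) ht.le (by linarith : (1:ℝ) ≤ 2 * m + 1) ?_
  intro ε hε hε1
  exact hKbound ε hε hε1

lemma partB [MeasurableSpace X] [BorelSpace X]
    (lam₀ a₀ : ℝ) (hlam₀ : 0 < lam₀) (ha₀ : 0 < a₀)
    (H : ∀ N : Set X, Metric.diam N < lam₀ →
      ∃ φ : X → X, ∀ x ∈ N, ∀ y ∈ N,
        a₀ * dist x y ≤ Metric.diam N * dist (φ x) (φ y)) :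
    upperBoxDim (Set.univ : Set X) ≤ dimH (Set.univ : Set X) := by
  by_cases htop : dimH (Set.univ : Set X) = ⊤
  · rw [htop]; exact le_top
  refine ENNReal.le_of_forall_pos_le_add fun δ hδ hlt => ?_
  have hδ' : (0:ℝ) < δ := hδ
  have h1 : dimH (Set.univ : Set X) <
      ENNReal.ofReal ((dimH (Set.univ : Set X)).toReal + δ) := by
    rw [ENNReal.lt_ofReal_iff_toReal_lt htop]
    linarith
  have h2 := partB_key lam₀ a₀ hlam₀ ha₀ H _ h1
  calc upperBoxDim (Set.univ : Set X)
      ≤ ENNReal.ofReal ((dimH (Set.univ : Set X)).toReal + δ) := h2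
    _ = ENNReal.ofReal ((dimH (Set.univ : Set X)).toReal) + ENNReal.ofReal δ :=
        ENNReal.ofReal_add ENNReal.toReal_nonneg hδ'.le
    _ = dimH (Set.univ : Set X) + δ := by
        rw [ENNReal.ofReal_toReal htop, ENNReal.ofReal_coe_nnreal]

end partB

/-- Falconer's theorem on quasi-self-similar sets.  Let `X` be a nonempty compact metric
space which is expansively quasi-self-similar: there exist `λ₀, a₀ > 0` such that for
every `N ⊆ X` with `diam N < λ₀` there is a map `φ : N → X` with
`a₀·d(x,y) ≤ diam N · d(φx, φy)` for all `x, y ∈ N`.  Then the Hausdorff dimension and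
the lower and upper box-counting dimensions of `X` all coincide. -/
theorem stmt8 (X : Type*) [MetricSpace X] [CompactSpace X] [Nonempty X]
    (lam₀ a₀ : ℝ) (hlam₀ : 0 < lam₀) (ha₀ : 0 < a₀)
    (H : ∀ N : Set X, Metric.diam N < lam₀ →
      ∃ φ : X → X, ∀ x ∈ N, ∀ y ∈ N,
        a₀ * dist x y ≤ Metric.diam N * dist (φ x) (φ y)) :
    dimH (Set.univ : Set X) = lowerBoxDim (Set.univ : Set X) ∧
    lowerBoxDim (Set.univ : Set X) = upperBoxDim (Set.univ : Set X) := by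
  borelize X
  have hA := partA (X := X)
  have hB := partB lam₀ a₀ hlam₀ ha₀ H
  have hlu : lowerBoxDim (Set.univ : Set X) ≤ upperBoxDim (Set.univ : Set X) :=
    Filter.liminf_le_limsup
  exact ⟨le_antisymm hA (hlu.trans hB), le_antisymm hlu (hB.trans hA)⟩

end
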